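/- arXiv:1807.01935 — 2 statements merged into one kernel-verified Lean document; each statement's English description precedes it below -/
import Mathlib

section
/- Let M be a module over a commutative ring on which an element f acts bijectively, and consider the graded module ι₊M = ⊕_{j≥0} M·∂^j with the 'multiplication by t' operator defined by t(m·∂^j) = (f·m)·∂^j − j·m·∂^{j−1} (with the convention m·∂^{−1} = 0). Then multiplication by t is bijective on each finite-level truncation G_p = ⊕_{j=0}^{p} M·∂^j, and hence on ι₊M. -/
private def tInv {M : Type*} [AddCommGroup M] (g : M → M) (p : ℕ) (w : ℕ → M) :
    ℕ → M
  | j =>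
    if h : p < j then 0
    else g (w j + (j + 1) • tInv g p w (j + 1))
  termination_by j => p + 1 - j
  decreasing_by omega

private lemma tInv_gt {M : Type*} [AddCommGroup M] (g : M → M) (p : ℕ) (w : ℕ → M)
    {j : ℕ} (h : p < j) : tInv g p w j = 0 := by
  rw [tInv]; simp [h]

private lemma tInv_le {M : Type*} [AddCommGroup M] (g : M → M) (p : ℕ) (w : ℕ → M)
    {j : ℕ} (h : ¬ p < j) : tInv g p w j = g (w j + (j + 1) • tInv g p w (j + 1)) := by
  rw [tInv]; simp [h]

/-- If `f` acts bijectively on the module `M`, then the operator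
`t(m·∂^j) = (f·m)·∂^j − j·m·∂^{j−1}` on `ι₊M = ⊕_{j≥0} M·∂^j` (elements encoded as
coefficient functions `ℕ → M`) is bijective on every finite-level truncation
`G_p = ⊕_{j=0}^p M·∂^j`, and on `ι₊M` itself (finitely supported functions). -/
theorem stmt8 {A : Type*} [CommRing A] {M : Type*} [AddCommGroup M] [Module A M]
    (f : A) (hf : Function.Bijective (fun m : M => f • m)) :
    (∀ p : ℕ, Set.BijOn (fun (v : ℕ → M) => fun j => f • v j - (j + 1) • v (j + 1))
        {v : ℕ → M | ∀ j > p, v j = 0} {v : ℕ → M | ∀ j > p, v j = 0}) ∧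
      Set.BijOn (fun (v : ℕ → M) => fun j => f • v j - (j + 1) • v (j + 1))
        {v : ℕ → M | (Function.support v).Finite}
        {v : ℕ → M | (Function.support v).Finite} := by
  set T : (ℕ → M) → (ℕ → M) :=
    fun v => fun j => f • v j - (j + 1) • v (j + 1) with hT
  set e := Equiv.ofBijective _ hf with he
  have hge : ∀ x : M, f • e.symm x = x := fun x => e.apply_symm_apply x
  -- kernel triviality on G_p
  have hker : ∀ p : ℕ, ∀ v : ℕ → M, (∀ j > p, v j = 0) → T v = 0 → v = 0 := by
    intro p v hv hTv
    have key : ∀ m j, p < j + m → v j = 0 := by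
      intro m
      induction m with
      | zero => intro j hj; exact hv j (by omega)
      | succ m ih =>
        intro j hj
        by_cases hjp : p < j
        · exact hv j hjp
        · have h1 : v (j + 1) = 0 := ih (j + 1) (by omega)
          have h2 : f • v j - (j + 1) • v (j + 1) = 0 := congrFun hTv j
          have h3 : f • v j = 0 := by rw [h1] at h2; simpa using h2
          have := hf.injective (a₁ := v j) (a₂ := 0) (by simpa using h3)
          exact this
    funext j; exact key (p + 1) j (by omega)
  -- surjectivity on G_p
  have hsurj : ∀ p : ℕ, ∀ w : ℕ → M, (∀ j > p, w j = 0) →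
      ∃ v : ℕ → M, (∀ j > p, v j = 0) ∧ T v = w := by
    intro p w hw
    refine ⟨tInv e.symm p w, fun j hj => tInv_gt _ _ _ hj, ?_⟩
    funext j
    by_cases hj : p < j
    · have h1 : tInv e.symm p w j = 0 := tInv_gt _ _ _ hj
      have h2 : tInv e.symm p w (j + 1) = 0 := tInv_gt _ _ _ (by omega)
      simp [hT, h1, h2, hw j hj]
    · have h1 := tInv_le e.symm p w hj
      simp only [hT]
      rw [h1, hge]
      abel
  -- T maps G_p to G_p
  have hmaps : ∀ p : ℕ, ∀ v : ℕ → M, (∀ j > p, v j = 0) → ∀ j > p, T v j = 0 := by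
    intro p v hv j hj
    simp [hT, hv j hj, hv (j + 1) (by omega)]
  -- injectivity on G_p via kernel
  have hinj : ∀ p : ℕ, ∀ v w : ℕ → M, (∀ j > p, v j = 0) → (∀ j > p, w j = 0) →
      T v = T w → v = w := by
    intro p v w hv hw h
    have hsub : T (v - w) = 0 := by
      funext j
      have h1 : T v j = T w j := congrFun h j
      have h2 : T v j - T w j = 0 := sub_eq_zero.mpr h1
      simp only [hT] at h2 ⊢
      simp only [Pi.sub_apply, Pi.zero_apply, smul_sub]
      rw [← h2]; abel
    have : v - w = 0 := hker p (v - w) (fun j hj => by simp [hv j hj, hw j hj]) hsub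
    exact sub_eq_zero.mp this
  have part1 : ∀ p : ℕ, Set.BijOn T {v : ℕ → M | ∀ j > p, v j = 0}
      {v : ℕ → M | ∀ j > p, v j = 0} := by
    intro p
    refine ⟨fun v hv => hmaps p v hv, fun v hv w hw h => hinj p v w hv hw h,
      fun w hw => ?_⟩
    obtain ⟨v, hv1, hv2⟩ := hsurj p w hw
    exact ⟨v, hv1, hv2⟩
  refine ⟨part1, ?_, ?_, ?_⟩
  · -- MapsTo for finite support
    intro v hv
    have : Function.support (T v) ⊆
        Function.support v ∪ (fun j => j + 1) ⁻¹' Function.support v := by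
      intro j hj
      by_contra hc
      simp only [Set.mem_union, Set.mem_preimage, Function.mem_support, not_or,
        not_not] at hc
      apply hj
      simp [hT, hc.1, hc.2]
    exact Set.Finite.subset (hv.union (Set.Finite.preimage
      (Set.injOn_of_injective (fun a b => by omega)) hv)) this
  · -- injectivity on finite support
    intro v hv w hw h
    obtain ⟨p, hp⟩ : ∃ p, ∀ j > p, v j = 0 ∧ w j = 0 := by
      obtain ⟨p, hp⟩ := (hv.union hw).bddAbove
      exact ⟨p, fun j hj => ⟨Function.notMem_support.mp (fun hmem => by
          exact absurd (hp (Set.mem_union_left _ hmem)) (by omega)),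
        Function.notMem_support.mp (fun hmem => by
          exact absurd (hp (Set.mem_union_right _ hmem)) (by omega))⟩⟩
    exact hinj p v w (fun j hj => (hp j hj).1) (fun j hj => (hp j hj).2) h
  · -- surjectivity on finite support
    intro w hw
    obtain ⟨p, hp⟩ := hw.bddAbove
    have hwp : ∀ j > p, w j = 0 := fun j hj => Function.notMem_support.mp
      (fun hmem => absurd (hp hmem) (by omega))
    obtain ⟨v, hv1, hv2⟩ := hsurj p w hwp
    refine ⟨v, ?_, hv2⟩
    exact Set.Finite.subset (Set.finite_Icc 0 p) (fun j hj => by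
      simp only [Set.mem_Icc]
      constructor
      · omega
      · by_contra hc
        exact Function.mem_support.mp hj (hv1 j (by omega)))
end

section
/- Let α ∈ ℚ and for 0 ≤ i ≤ p define w'_i = ∑_{j=i}^{p} (j choose i)·Q_{j−i}(α)·v_j·f^{-(j−i+1)} in the localization ℚ(α)[f, f^{-1}]-module ⊕ℚ·v_j, where Q_m(x) = x(x+1)⋯(x+m−1) and β = 1−α. Then for 0 ≤ i ≤ p−1 the identity f·w'_i − (i+1)·w'_{i+1} = v_i + ∑_{j=i+1}^{p} (j choose i)·Q_{j−i}(−β)·v_j·f^{-(j−i)} holds. -/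
open Polynomial Finset

lemma asc_key (m : ℕ) (α : ℚ) :
    (ascPochhammer ℚ (m + 1)).eval α - ((m : ℚ) + 1) * (ascPochhammer ℚ m).eval α =
      (ascPochhammer ℚ (m + 1)).eval (α - 1) := by
  conv_lhs => rw [ascPochhammer_succ_right]
  conv_rhs => rw [ascPochhammer_succ_left]
  simp [eval_mul, eval_comp]
  ring

/-- Remark 3.3 of the paper: with `β = 1 − α`, `f` invertible, and
`w'_i = ∑_{j=i}^{p} C(j,i)·Q_{j−i}(α)·v_j·f^{−(j−i+1)}`, one has for `0 ≤ i ≤ p−1`: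
`f·w'_i − (i+1)·w'_{i+1} = v_i + ∑_{j=i+1}^{p} C(j,i)·Q_{j−i}(−β)·v_j·f^{−(j−i)}`. -/
theorem stmt12 {R : Type*} [CommRing R] [Algebra ℚ R] (f : Rˣ) (v : ℕ → R)
    (α β : ℚ) (hβ : β = 1 - α) (p : ℕ)
    (w' : ℕ → R)
    (hw' : ∀ i, w' i = ∑ j ∈ Finset.Icc i p,
        (j.choose i : R) * algebraMap ℚ R ((ascPochhammer ℚ (j - i)).eval α) *
          v j * ((f⁻¹ : Rˣ) : R) ^ (j - i + 1)) :
    ∀ i, i < p →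
      (f : R) * w' i - ((i : R) + 1) * w' (i + 1) =
        v i + ∑ j ∈ Finset.Icc (i + 1) p,
          (j.choose i : R) * algebraMap ℚ R ((ascPochhammer ℚ (j - i)).eval (-β)) *
            v j * ((f⁻¹ : Rˣ) : R) ^ (j - i) := by
  intro i hi
  have hfinv : (f : R) * ((f⁻¹ : Rˣ) : R) = 1 := Units.mul_inv f
  rw [hw' i, hw' (i + 1), Finset.mul_sum, Finset.mul_sum]
  have hsplit : Finset.Icc i p = insert i (Finset.Icc (i + 1) p) := by
    ext x; simp [Finset.mem_Icc]; omega
  rw [hsplit, Finset.sum_insert (by simp)]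
  have h0 : (f : R) * ((i.choose i : R) * algebraMap ℚ R ((ascPochhammer ℚ (i - i)).eval α)
      * v i * ((f⁻¹ : Rˣ) : R) ^ (i - i + 1)) = v i := by
    simp [Nat.sub_self]
    calc (f:R) * (v i * ((f⁻¹ : Rˣ) : R)) = v i * ((f:R) * ((f⁻¹ : Rˣ) : R)) := by ring
    _ = v i := by rw [hfinv, mul_one]
  rw [h0, add_sub_assoc]
  congr 1
  rw [← Finset.sum_sub_distrib]
  apply Finset.sum_congr rfl
  intro j hj
  obtain ⟨hji, hjp⟩ := Finset.mem_Icc.mp hj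
  obtain ⟨m, rfl⟩ : ∃ m, j = i + 1 + m := ⟨j - (i+1), by omega⟩
  have e1 : i + 1 + m - i = m + 1 := by omega
  have e2 : i + 1 + m - (i + 1) = m := by omega
  rw [e1, e2]
  have hch : ((i + 1 + m).choose (i + 1) : R) * ((i : R) + 1) =
      ((i + 1 + m).choose i : R) * ((m : R) + 1) := by
    have := Nat.choose_succ_right_eq (i + 1 + m) i
    have h2 : i + 1 + m - i = m + 1 := by omega
    rw [h2] at this
    exact_mod_cast congrArg (Nat.cast : ℕ → R) this
  have hpow : (f : R) * ((f⁻¹ : Rˣ) : R) ^ (m + 1 + 1) =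
      ((f⁻¹ : Rˣ) : R) ^ (m + 1) := by
    rw [pow_succ]
    calc (f:R) * (((f⁻¹ : Rˣ) : R) ^ (m+1) * ((f⁻¹ : Rˣ) : R))
        = ((f⁻¹ : Rˣ) : R) ^ (m+1) * ((f:R) * ((f⁻¹ : Rˣ) : R)) := by ring
      _ = ((f⁻¹ : Rˣ) : R) ^ (m+1) := by rw [hfinv, mul_one]
  have hQ : algebraMap ℚ R ((ascPochhammer ℚ (m + 1)).eval α) -
      ((m : R) + 1) * algebraMap ℚ R ((ascPochhammer ℚ m).eval α) =
      algebraMap ℚ R ((ascPochhammer ℚ (m + 1)).eval (-β)) := by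
    rw [hβ, neg_sub, ← asc_key m α, map_sub, map_mul]
    push_cast
    ring
  calc (f : R) * (((i + 1 + m).choose i : R) * algebraMap ℚ R ((ascPochhammer ℚ (m + 1)).eval α)
        * v (i + 1 + m) * ((f⁻¹ : Rˣ) : R) ^ (m + 1 + 1)) -
      ((i : R) + 1) * (((i + 1 + m).choose (i + 1) : R) *
        algebraMap ℚ R ((ascPochhammer ℚ m).eval α) * v (i + 1 + m) *
        ((f⁻¹ : Rˣ) : R) ^ (m + 1))
      = ((i + 1 + m).choose i : R) * algebraMap ℚ R ((ascPochhammer ℚ (m + 1)).eval α)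
        * v (i + 1 + m) * ((f : R) * ((f⁻¹ : Rˣ) : R) ^ (m + 1 + 1)) -
        (((i + 1 + m).choose (i + 1) : R) * ((i : R) + 1)) *
        (algebraMap ℚ R ((ascPochhammer ℚ m).eval α) * v (i + 1 + m) *
        ((f⁻¹ : Rˣ) : R) ^ (m + 1)) := by ring
    _ = ((i + 1 + m).choose i : R) *
        (algebraMap ℚ R ((ascPochhammer ℚ (m + 1)).eval α) -
          ((m : R) + 1) * algebraMap ℚ R ((ascPochhammer ℚ m).eval α)) *
        v (i + 1 + m) * ((f⁻¹ : Rˣ) : R) ^ (m + 1) := by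
        rw [hpow, hch]; ring
    _ = ((i + 1 + m).choose i : R) * algebraMap ℚ R ((ascPochhammer ℚ (m + 1)).eval (-β)) *
        v (i + 1 + m) * ((f⁻¹ : Rˣ) : R) ^ (m + 1) := by rw [hQ]
end
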